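/- Let n ≥ 1, let B ∈ ℝ^{n×n} be a symmetric positive-definite matrix, μ ∈ ℝⁿ, and let 1 < q < 1 + 2/n. Then the integral over ℝⁿ of [1 + (q-1)·(x-μ)ᵀB(x-μ)]^{-q/(q-1)} (the unnormalized q-escort integrand) converges and equals (q-1)^{-n/2}·(det B)^{-1/2}·π^{n/2}·Γ(q/(q-1) - n/2)/Γ(q/(q-1)). -/

import Mathlib

open MeasureTheory Matrix

namespace QEscortAux

open Real Set

lemma real_beta {a b : ℝ} (ha : 0 < a) (hb : 0 < b) :
    ∫ x in Ioo (0:ℝ) 1, x ^ (a-1) * (1-x) ^ (b-1) = Gamma a * Gamma b / Gamma (a+b) := by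
  have hbeta : Complex.betaIntegral a b
      = ((∫ x in Ioo (0:ℝ) 1, x ^ (a-1) * (1-x) ^ (b-1) : ℝ) : ℂ) := by
    rw [Complex.betaIntegral, intervalIntegral.integral_of_le zero_le_one,
      integral_Ioc_eq_integral_Ioo]
    refine Eq.trans (setIntegral_congr_fun measurableSet_Ioo (fun x hx => ?_)) integral_ofReal
    obtain ⟨hx0, hx1⟩ := hx
    rw [show (a:ℂ)-1 = ((a-1:ℝ):ℂ) by push_cast; ring,
      show (b:ℂ)-1 = ((b-1:ℝ):ℂ) by push_cast; ring,
      show (1 - (x:ℂ)) = ((1-x:ℝ):ℂ) by push_cast; ring,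
      ← Complex.ofReal_cpow hx0.le, ← Complex.ofReal_cpow (by linarith : (0:ℝ) ≤ 1 - x)]
    norm_cast
  have hG : Complex.Gamma a * Complex.Gamma b
      = Complex.Gamma (a+b) * Complex.betaIntegral a b :=
    Complex.Gamma_mul_Gamma_eq_betaIntegral (by simpa using ha) (by simpa using hb)
  have hGab : Gamma (a+b) ≠ 0 := (Gamma_pos_of_pos (by linarith)).ne'
  rw [hbeta, ← Complex.ofReal_add, Complex.Gamma_ofReal, Complex.Gamma_ofReal,
    Complex.Gamma_ofReal, ← Complex.ofReal_mul, ← Complex.ofReal_mul] at hG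
  have h2 := Complex.ofReal_injective hG
  field_simp
  linarith [h2]

lemma beta_Ioi {a b : ℝ} (ha : 0 < a) (hb : 0 < b) :
    ∫ t in Ioi (0:ℝ), t ^ (a-1) * (1+t) ^ (-(a+b)) = Gamma a * Gamma b / Gamma (a+b) := by
  rw [← real_beta ha hb]
  have himg : (fun u : ℝ => u / (1-u)) '' Ioo 0 1 = Ioi 0 := by
    ext t
    constructor
    · rintro ⟨u, ⟨hu0, hu1⟩, rfl⟩
      exact div_pos hu0 (by linarith)
    · intro ht
      have ht0 : (0:ℝ) < t := ht
      refine ⟨t / (1+t), ⟨div_pos ht0 (by linarith), by rw [div_lt_one (by linarith)]; linarith⟩, ?_⟩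
      have h1 : 1 - t/(1+t) = 1/(1+t) := by field_simp; ring
      show t/(1+t) / (1 - t/(1+t)) = t
      rw [h1]
      field_simp
  have hderiv : ∀ u ∈ Ioo (0:ℝ) 1, HasDerivWithinAt (fun u : ℝ => u / (1-u))
      ((1-u)^2)⁻¹ (Ioo 0 1) u := by
    intro u hu
    have h1u : (1:ℝ) - u ≠ 0 := by simp only [mem_Ioo] at hu; intro h; linarith [hu.2]
    have := (hasDerivAt_id' u).div ((hasDerivAt_const u 1).sub (hasDerivAt_id' u)) h1u
    simpa [Pi.div_def, Pi.sub_def] using this.hasDerivWithinAt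
  have hinj : InjOn (fun u : ℝ => u / (1-u)) (Ioo 0 1) := by
    intro u hu v hv h
    simp only [mem_Ioo] at hu hv
    have h1u : (1:ℝ) - u ≠ 0 := by intro h'; linarith [hu.2]
    have h1v : (1:ℝ) - v ≠ 0 := by intro h'; linarith [hv.2]
    field_simp at h
    linarith
  rw [← himg, integral_image_eq_integral_abs_deriv_smul measurableSet_Ioo hderiv hinj]
  refine setIntegral_congr_fun measurableSet_Ioo (fun u hu => ?_)
  obtain ⟨hu0, hu1⟩ := hu
  have h1u : (0:ℝ) < 1 - u := by linarith
  have e1 : (1:ℝ) + u / (1-u) = (1-u)⁻¹ := by field_simp; ring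
  rw [smul_eq_mul, e1, abs_of_pos (by positivity),
    div_rpow hu0.le h1u.le]
  rw [div_eq_mul_inv, ← rpow_neg h1u.le, ← rpow_natCast (1-u) 2, ← rpow_neg h1u.le]
  push_cast
  rw [← rpow_neg_one (1-u), ← rpow_mul h1u.le, show (-1:ℝ)*-(a+b) = a+b by ring]
  rw [mul_assoc, ← rpow_add h1u, mul_comm (u ^ (a-1)), ← mul_assoc, ← rpow_add h1u,
    mul_comm]
  congr 1
  ring

lemma radial_int (n : ℕ) (hn : 1 ≤ n) {s : ℝ} (hs : (n:ℝ)/2 < s) :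
    ∫ y in Ioi (0:ℝ), y ^ (n-1 : ℕ) * (1+y^2) ^ (-s)
      = Gamma ((n:ℝ)/2) * Gamma (s - (n:ℝ)/2) / (2 * Gamma s) := by
  have key := integral_comp_rpow_Ioi
    (fun t => (1/2 : ℝ) * (t ^ ((n:ℝ)/2 - 1) * (1+t) ^ (-s))) (p := 2) two_ne_zero
  have h1 : ∫ y in Ioi (0:ℝ), y ^ (n-1 : ℕ) * (1+y^2) ^ (-s)
      = ∫ x in Ioi (0:ℝ), (|2| * x ^ ((2:ℝ) - 1)) •
          ((1/2 : ℝ) * ((x ^ (2:ℝ)) ^ ((n:ℝ)/2 - 1) * (1+x ^ (2:ℝ)) ^ (-s))) := by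
    refine setIntegral_congr_fun measurableSet_Ioi (fun x hx => ?_)
    have hx0 : (0:ℝ) < x := hx
    rw [smul_eq_mul, ← rpow_natCast x 2, ← rpow_mul hx0.le]
    rw [show (2:ℝ) * ((n:ℝ)/2 - 1) = (n:ℝ) - 2 by ring]
    rw [show |(2:ℝ)| = 2 by norm_num, rpow_natCast x 2,
      show (2:ℝ) - 1 = (1:ℝ) by ring, rpow_one,
      show ((n:ℝ) - 2) = ((n:ℝ) - 1) + (-1) by ring, rpow_add hx0, rpow_neg_one,
      ← rpow_natCast x (n-1), Nat.cast_sub hn, Nat.cast_one]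
    field_simp
    norm_num
  rw [h1, key]
  rw [integral_const_mul]
  have ha : (0:ℝ) < (n:ℝ)/2 := by positivity
  have hb : (0:ℝ) < s - (n:ℝ)/2 := by linarith
  have := beta_Ioi ha hb
  rw [show (n:ℝ)/2 + (s - (n:ℝ)/2) = s by ring] at this
  rw [this]
  ring

lemma euclid_integrable (n : ℕ) {s : ℝ} (hs : (n:ℝ)/2 < s) :
    Integrable fun x : EuclideanSpace ℝ (Fin n) => (1 + ‖x‖^2) ^ (-s) := by
  have h := integrable_rpow_neg_one_add_norm_sq (E := EuclideanSpace ℝ (Fin n))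
    (μ := volume) (r := 2*s) (by rw [finrank_euclideanSpace_fin]; linarith)
  simpa [neg_div, mul_div_assoc, mul_div_cancel_left₀] using h

lemma euclid_int (n : ℕ) (hn : 1 ≤ n) {s : ℝ} (hs : (n:ℝ)/2 < s) :
    ∫ x : EuclideanSpace ℝ (Fin n), (1 + ‖x‖^2) ^ (-s)
      = π ^ ((n:ℝ)/2) * Gamma (s - (n:ℝ)/2) / Gamma s := by
  haveI : Nonempty (Fin n) := ⟨⟨0, hn⟩⟩
  have key := MeasureTheory.integral_fun_norm_addHaar
    (volume : Measure (EuclideanSpace ℝ (Fin n))) (fun y : ℝ => (1+y^2) ^ (-s))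
  rw [finrank_euclideanSpace_fin] at key
  rw [show (fun x : EuclideanSpace ℝ (Fin n) => (1 + ‖x‖^2) ^ (-s))
      = fun x : EuclideanSpace ℝ (Fin n) => (fun y : ℝ => (1+y^2)^(-s)) ‖x‖ from rfl]
  rw [key]
  have hball : (volume (Metric.ball (0 : EuclideanSpace ℝ (Fin n)) 1)).toReal
      = √π ^ n / Gamma ((n:ℝ)/2 + 1) := by
    rw [EuclideanSpace.volume_ball (Fin n) 0 1]
    simp [Fintype.card_fin, ENNReal.toReal_ofReal
      (by positivity : (0:ℝ) ≤ √π ^ n / Gamma ((n:ℝ)/2 + 1))]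
  rw [measureReal_def, hball]
  have hrad : ∫ y in Ioi (0:ℝ), y ^ (n-1 : ℕ) • ((1+y^2) ^ (-s))
      = Gamma ((n:ℝ)/2) * Gamma (s - (n:ℝ)/2) / (2 * Gamma s) := by
    rw [← radial_int n hn hs]
    rfl
  rw [hrad]
  have hsqrt : √π ^ n = π ^ ((n:ℝ)/2) := by
    rw [Real.sqrt_eq_rpow, ← Real.rpow_natCast (π ^ ((1:ℝ)/2)) n,
      ← Real.rpow_mul pi_pos.le, show (1:ℝ)/2*(n:ℝ) = (n:ℝ)/2 by ring]
  have hG1 : Gamma ((n:ℝ)/2 + 1) = ((n:ℝ)/2) * Gamma ((n:ℝ)/2) :=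
    Real.Gamma_add_one (by positivity)
  have hGn : Gamma ((n:ℝ)/2) ≠ 0 := (Gamma_pos_of_pos (by positivity)).ne'
  have hn1 : (1:ℝ) ≤ (n:ℝ) := by exact_mod_cast hn
  have hGs : Gamma s ≠ 0 := (Gamma_pos_of_pos (by linarith)).ne'
  have hn0 : (n:ℝ) ≠ 0 := by positivity
  rw [hsqrt, hG1, nsmul_eq_mul, smul_eq_mul]
  field_simp

section
open scoped MatrixOrder
lemma exists_sqrt {n : ℕ} {C : Matrix (Fin n) (Fin n) ℝ} (h : C.PosDef) :
    ∃ S : Matrix (Fin n) (Fin n) ℝ, S * S = C ∧ Sᵀ = S := by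
  refine ⟨CFC.sqrt C, CFC.sqrt_mul_sqrt_self C h.posSemidef.nonneg, ?_⟩
  have := (CFC.sqrt_nonneg C).posSemidef.1.eq
  rwa [conjTranspose_eq_transpose_of_trivial] at this
end

end QEscortAux


/-- For `n ≥ 1`, a symmetric positive-definite `B`, `μ ∈ ℝⁿ`, and `1 < q < 1 + 2/n`,
the integral over `ℝⁿ` of `[1 + (q-1)·(x-μ)ᵀB(x-μ)]^(-q/(q-1))` (the unnormalized
q-escort integrand) converges and equals
`(q-1)^(-n/2)·(det B)^(-1/2)·π^(n/2)·Γ(q/(q-1) - n/2)/Γ(q/(q-1))`. -/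
theorem integral_qGaussian_escort_kernel (n : ℕ) (hn : 1 ≤ n) (B : Matrix (Fin n) (Fin n) ℝ)
    (hsymm : B.IsSymm) (hpos : B.PosDef) (μ : Fin n → ℝ) (q : ℝ)
    (hq1 : 1 < q) (hq2 : q < 1 + 2 / (n : ℝ)) :
    Integrable (fun x : Fin n → ℝ =>
      (1 + (q - 1) * ((x - μ) ⬝ᵥ B.mulVec (x - μ))) ^ (-(q / (q - 1)))) ∧
    (∫ x : Fin n → ℝ, (1 + (q - 1) * ((x - μ) ⬝ᵥ B.mulVec (x - μ))) ^ (-(q / (q - 1)))) =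
      (q - 1) ^ (-(n : ℝ) / 2) * B.det ^ (-(1 : ℝ) / 2) * Real.pi ^ ((n : ℝ) / 2) *
        Real.Gamma (q / (q - 1) - (n : ℝ) / 2) / Real.Gamma (q / (q - 1)) := by
  classical
  have hq0 : (0:ℝ) < q - 1 := by linarith
  have hn1 : (1:ℝ) ≤ (n:ℝ) := by exact_mod_cast hn
  have hn0 : (0:ℝ) < (n:ℝ) := by linarith
  set s : ℝ := q / (q - 1) with hs_def
  have hns : (n:ℝ)/2 < s := by
    rw [hs_def, lt_div_iff₀ hq0]
    have h2 : q - 1 < 2 / (n:ℝ) := by linarith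
    have h3 : (n:ℝ) * (q-1) < 2 := by
      calc (n:ℝ)*(q-1) < (n:ℝ)*(2/(n:ℝ)) := by exact mul_lt_mul_of_pos_left h2 hn0
        _ = 2 := by field_simp
    nlinarith
  -- matrix setup
  set C : Matrix (Fin n) (Fin n) ℝ := (q-1) • B with hC_def
  have hCpd : C.PosDef := by
    refine posDef_iff_dotProduct_mulVec.mpr ⟨?_, ?_⟩
    · show Cᴴ = C
      rw [hC_def, conjTranspose_smul]
      rw [hpos.1.eq]
      norm_num
    · intro x hx
      rw [hC_def, smul_mulVec, dotProduct_smul, smul_eq_mul]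
      exact mul_pos hq0 (hpos.dotProduct_mulVec_pos hx)
  obtain ⟨S, hSS, hSsymm⟩ := QEscortAux.exists_sqrt hCpd
  have hdetC : C.det = (q-1)^n * B.det := by
    rw [hC_def, det_smul, Fintype.card_fin]
  have hdetCpos : 0 < C.det := hCpd.det_pos
  have hdetS : S.det * S.det = C.det := by rw [← det_mul, hSS]
  have hdetSne : S.det ≠ 0 := by
    intro h
    rw [h, mul_zero] at hdetS
    exact hdetCpos.ne hdetS
  have habs : |S.det| = Real.sqrt C.det := by
    rw [← hdetS, Real.sqrt_mul_self_eq_abs]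
  -- the function g on pi space
  set g : (Fin n → ℝ) → ℝ := fun w => (1 + w ⬝ᵥ w) ^ (-s) with hg_def
  have hdot_nonneg : ∀ w : Fin n → ℝ, 0 ≤ w ⬝ᵥ w := by
    intro w
    simp only [dotProduct, ← sq]
    positivity
  have hg_cont : Continuous g := by
    apply Continuous.rpow_const
    · have : Continuous fun w : Fin n → ℝ => w ⬝ᵥ w := by
        simp only [dotProduct]
        exact continuous_finset_sum _ (fun i _ => (continuous_apply i).mul (continuous_apply i))
      exact continuous_const.add this
    · intro w
      left
      have := hdot_nonneg w
      positivity
  -- Euclidean transfer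
  have vp := EuclideanSpace.volume_preserving_symm_measurableEquiv_toLp (Fin n)
  have hemb := (MeasurableEquiv.toLp 2 (Fin n → ℝ)).symm.measurableEmbedding
  have hg_comp : (fun x : EuclideanSpace ℝ (Fin n)
      => g ((MeasurableEquiv.toLp 2 (Fin n → ℝ)).symm x))
      = fun x : EuclideanSpace ℝ (Fin n) => (1 + ‖x‖^2) ^ (-s) := by
    funext x
    rw [hg_def]
    congr 2
    rw [EuclideanSpace.norm_eq, Real.sq_sqrt (by positivity)]
    simp [dotProduct, sq, MeasurableEquiv.coe_toLp_symm]
  have hInt_g : Integrable g (volume : Measure (Fin n → ℝ)) := by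
    rw [← vp.integrable_comp_emb hemb]
    show Integrable (fun x : EuclideanSpace ℝ (Fin n)
      => g ((MeasurableEquiv.toLp 2 (Fin n → ℝ)).symm x)) volume
    rw [hg_comp]
    exact QEscortAux.euclid_integrable n hns
  have hval_g : ∫ w, g w = Real.pi ^ ((n:ℝ)/2) * Real.Gamma (s - (n:ℝ)/2) / Real.Gamma s := by
    rw [← vp.integral_comp hemb g]
    rw [show (fun x : EuclideanSpace ℝ (Fin n)
        => g ((MeasurableEquiv.toLp 2 (Fin n → ℝ)).symm x))
        = fun x : EuclideanSpace ℝ (Fin n) => (1 + ‖x‖^2) ^ (-s) from hg_comp]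
    exact QEscortAux.euclid_int n hn hns
  -- linear change of variables
  set T : (Fin n → ℝ) →ₗ[ℝ] Fin n → ℝ := Matrix.toLin' S with hT_def
  have hdetT : LinearMap.det T = S.det := by rw [hT_def, LinearMap.det_toLin']
  have hmap : Measure.map T volume = ENNReal.ofReal |(S.det)⁻¹| • volume := by
    rw [Real.map_linearMap_volume_pi_eq_smul_volume_pi (by rw [hdetT]; exact hdetSne), hdetT]
  have hTmeas : Measurable T := T.continuous_of_finiteDimensional.measurable
  have hcne : ENNReal.ofReal |(S.det)⁻¹| ≠ 0 := by
    rw [Ne, ENNReal.ofReal_eq_zero, not_le]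
    exact abs_pos.mpr (inv_ne_zero hdetSne)
  have hctop : ENNReal.ofReal |(S.det)⁻¹| ≠ ⊤ := ENNReal.ofReal_ne_top
  have hInt_comp : Integrable (fun v => g (S.mulVec v)) (volume : Measure (Fin n → ℝ)) := by
    have h1 : Integrable g (Measure.map T volume) := by
      rw [hmap]
      exact (integrable_smul_measure hcne hctop).mpr hInt_g
    have := (integrable_map_measure (hg_cont.aestronglyMeasurable) hTmeas.aemeasurable).mp h1
    simpa [hT_def, Function.comp_def, Matrix.toLin'_apply] using this
  have hval_comp : ∫ v, g (S.mulVec v) = |(S.det)⁻¹| * ∫ w, g w := by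
    have h1 : ∫ w, g w ∂(Measure.map T volume) = ∫ v, g (T v) :=
      integral_map hTmeas.aemeasurable hg_cont.aestronglyMeasurable
    rw [show (fun v => g (S.mulVec v)) = fun v => g (T v) by
        funext v; rw [hT_def, Matrix.toLin'_apply]]
    rw [← h1, hmap, integral_smul_measure, smul_eq_mul,
      ENNReal.toReal_ofReal (abs_nonneg _)]
  -- quadratic form identity
  have hquad : ∀ v : Fin n → ℝ, (q-1) * (v ⬝ᵥ B.mulVec v) = (S.mulVec v) ⬝ᵥ (S.mulVec v) := by
    intro v
    have h1 : (q-1) * (v ⬝ᵥ B.mulVec v) = v ⬝ᵥ C.mulVec v := by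
      rw [hC_def, smul_mulVec, dotProduct_smul, smul_eq_mul]
    rw [h1, ← hSS, ← Matrix.mulVec_mulVec, Matrix.dotProduct_mulVec,
      ← Matrix.mulVec_transpose, hSsymm]
  -- put everything together
  have hfun : (fun x : Fin n → ℝ =>
      (1 + (q - 1) * ((x - μ) ⬝ᵥ B.mulVec (x - μ))) ^ (-(q / (q - 1))))
      = fun x : Fin n → ℝ => g (S.mulVec (x - μ)) := by
    funext x
    rw [hg_def, hquad (x - μ), ← hs_def]
  constructor
  · rw [hfun]
    exact (hInt_comp.comp_sub_right μ)
  · rw [hfun]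
    rw [integral_sub_right_eq_self (fun v => g (S.mulVec v)) μ]
    rw [hval_comp, hval_g, abs_inv, habs, hdetC]
    have hqB : (0:ℝ) ≤ (q-1)^n * B.det := mul_nonneg (pow_nonneg hq0.le n) hpos.det_pos.le
    rw [Real.sqrt_eq_rpow, ← Real.rpow_neg hqB, ]
    rw [Real.mul_rpow (pow_nonneg hq0.le n) hpos.det_pos.le]
    rw [← Real.rpow_natCast (q-1) n, ← Real.rpow_mul hq0.le]
    rw [show (n:ℝ) * -(1/2) = -(n:ℝ)/2 by ring, show -(1/2 : ℝ) = -(1:ℝ)/2 by norm_num]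
    ring
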